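/- Let Q_n be the hypercube graph of dimension n with adjacency matrix A, let k be a natural number, and let u be any vertex of Q_n. Then (A^k)_{uu} = (1/2^n) · Σ_{j=0}^{n} C(n,j) · (n − 2j)^k, where C(n,j) denotes the binomial coefficient. -/

import Mathlib

open Finset Polynomial

/-- The `t`-th power graph: vertices are adjacent when they are distinct and at
graph (geodesic) distance at most `t` in `G`. -/
def powerGraph {V : Type*} (G : SimpleGraph V) (t : ℕ) : SimpleGraph V where
  Adj u v := u ≠ v ∧ G.Reachable u v ∧ G.dist u v ≤ t
  symm := ⟨by
    rintro u v ⟨h1, h2, h3⟩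
    exact ⟨h1.symm, h2.symm, by rwa [SimpleGraph.dist_comm]⟩⟩
  loopless := ⟨fun v h => h.1 rfl⟩

/-- The distance-`t` chromatic number of a graph. -/
noncomputable def distChromaticNumber {V : Type*} (G : SimpleGraph V) (t : ℕ) : ℕ∞ :=
  (powerGraph G t).chromaticNumber

/-- `x` is an eigenvalue of the (real) adjacency matrix of `G`. -/
def IsAdjEigenvalue {V : Type*} [Fintype V] [DecidableEq V] (G : SimpleGraph V)
    [DecidableRel G.Adj] (x : ℝ) : Prop :=
  ∃ v : V → ℝ, v ≠ 0 ∧ (SimpleGraph.adjMatrix ℝ G).mulVec v = x • v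

/-- The hypercube graph `Q_n`. -/
def hypercube (n : ℕ) : SimpleGraph (Fin n → Fin 2) where
  Adj u v := hammingDist u v = 1
  symm := ⟨fun u v h => by (try simp only at h ⊢); rwa [hammingDist_comm]⟩
  loopless := ⟨fun u h => by simp only [hammingDist_self] at h; exact absurd h (by norm_num)⟩

noncomputable instance (n : ℕ) : DecidableRel (hypercube n).Adj :=
  fun _ _ => Classical.dec _

/-- The Lee graph `G(n,q)`: the `n`-fold Cartesian product of the `q`-cycle. -/
def leeGraph (n q : ℕ) : SimpleGraph (Fin n → ZMod q) where
  Adj u v := u ≠ v ∧ ∃ i, (u i = v i + 1 ∨ v i = u i + 1) ∧ ∀ j, j ≠ i → u j = v j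
  symm := ⟨by
    rintro u v ⟨hne, i, h, hj⟩
    exact ⟨hne.symm, i, h.symm, fun j hji => (hj j hji).symm⟩⟩
  loopless := ⟨fun u h => h.1 rfl⟩

noncomputable instance (n q : ℕ) : DecidableRel (leeGraph n q).Adj :=
  fun _ _ => Classical.dec _

/-- The Lee distance on `(ℤ/qℤ)^n`. -/
def leeDist {n q : ℕ} (b c : Fin n → ZMod q) : ℕ :=
  ∑ i, min ((b i - c i).val) (q - (b i - c i).val)

noncomputable def chi {n : ℕ} (s u : Fin n → Fin 2) : ℝ :=
  ∏ i, (-1 : ℝ) ^ ((s i).val * (u i).val)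

def wt {n : ℕ} (s : Fin n → Fin 2) : ℕ := ∑ i, (s i).val

lemma fin2_cases (a : Fin 2) : a = 0 ∨ a = 1 := by omega

lemma chi_mul_self {n : ℕ} (s u : Fin n → Fin 2) : chi s u * chi s u = 1 := by
  rw [chi, ← Finset.prod_mul_distrib]
  apply Finset.prod_eq_one
  intro i _
  rw [← pow_add, ← two_mul, pow_mul]
  norm_num

lemma chi_orth {n : ℕ} (u v : Fin n → Fin 2) :
    ∑ s : Fin n → Fin 2, chi s u * chi s v = if u = v then (2:ℝ)^n else 0 := by
  have h1 : ∀ s : Fin n → Fin 2, chi s u * chi s v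
      = ∏ i, ((-1:ℝ) ^ ((s i).val * (u i).val) * (-1:ℝ) ^ ((s i).val * (v i).val)) := by
    intro s; rw [chi, chi, ← Finset.prod_mul_distrib]
  simp_rw [h1]
  rw [← Fintype.prod_sum (fun i (b : Fin 2) =>
    ((-1:ℝ) ^ (b.val * (u i).val) * (-1:ℝ) ^ (b.val * (v i).val)))]
  have h2 : ∀ i, (∑ b : Fin 2, ((-1:ℝ) ^ (b.val * (u i).val) * (-1:ℝ) ^ (b.val * (v i).val)))
      = if u i = v i then 2 else 0 := by
    intro i
    rcases fin2_cases (u i) with h | h <;> rcases fin2_cases (v i) with h' | h' <;>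
      rw [h, h'] <;> simp [Fin.sum_univ_two] <;> norm_num
  rw [Finset.prod_congr rfl fun i _ => h2 i]
  by_cases h : u = v
  · subst h; simp
  · rw [if_neg h]
    obtain ⟨i, hi⟩ := Function.ne_iff.mp h
    exact Finset.prod_eq_zero (Finset.mem_univ i) (if_neg hi)

def flp {n : ℕ} (i : Fin n) (u : Fin n → Fin 2) : Fin n → Fin 2 :=
  Function.update u i (u i + 1)

lemma fin2_add_one_ne (a : Fin 2) : a + 1 ≠ a := by omega

lemma fin2_ne_imp (a b : Fin 2) (h : a ≠ b) : b = a + 1 := by omega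

lemma adj_iff_flp {n : ℕ} (u w : Fin n → Fin 2) :
    (hypercube n).Adj u w ↔ ∃ i, w = flp i u := by
  constructor
  · intro h
    have h' : (Finset.univ.filter fun i => u i ≠ w i).card = 1 := h
    obtain ⟨i, hi⟩ := Finset.card_eq_one.mp h'
    refine ⟨i, funext fun j => ?_⟩
    by_cases hji : j = i
    · subst hji
      have hne : u j ≠ w j := by
        have : j ∈ Finset.univ.filter fun i => u i ≠ w i := hi ▸ Finset.mem_singleton_self j
        simpa using this
      rw [fin2_ne_imp _ _ hne]
      simp [flp]
    · have heq : u j = w j := by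
        by_contra hne
        have : j ∈ Finset.univ.filter fun i => u i ≠ w i := by simpa using hne
        rw [hi, Finset.mem_singleton] at this
        exact hji this
      simp [flp, Function.update_of_ne hji, heq]
  · rintro ⟨i, rfl⟩
    show (Finset.univ.filter fun j => u j ≠ flp i u j).card = 1
    have hset : (Finset.univ.filter fun j => u j ≠ flp i u j) = {i} := by
      ext j
      simp only [Finset.mem_filter, Finset.mem_univ, true_and, Finset.mem_singleton]
      by_cases hji : j = i
      · subst hji
        simp only [flp, Function.update_self, iff_true]
        exact fun hh => fin2_add_one_ne (u j) hh.symm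
      · simp [flp, Function.update_of_ne hji, hji]
    rw [hset, Finset.card_singleton]

lemma neighborFinset_eq {n : ℕ} (u : Fin n → Fin 2) :
    (hypercube n).neighborFinset u = Finset.image (fun i => flp i u) Finset.univ := by
  ext w
  simp only [SimpleGraph.mem_neighborFinset, Finset.mem_image, Finset.mem_univ, true_and]
  rw [adj_iff_flp]
  exact exists_congr fun i => eq_comm

lemma flp_injective {n : ℕ} (u : Fin n → Fin 2) :
    Function.Injective (fun i => flp i u) := by
  intro i j h
  by_contra hij
  have h1 := congrFun h i
  simp only [flp, Function.update_self, Function.update_of_ne hij] at h1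
  exact fin2_add_one_ne (u i) h1

lemma neg_one_pow_val (a : Fin 2) : ((-1:ℝ)) ^ a.val = 1 - 2 * a.val := by
  rcases fin2_cases a with h | h <;> rw [h] <;> norm_num

lemma chi_flp {n : ℕ} (s u : Fin n → Fin 2) (i : Fin n) :
    chi s (flp i u) = (-1:ℝ) ^ (s i).val * chi s u := by
  rw [chi, chi, ← Finset.mul_prod_erase Finset.univ _ (Finset.mem_univ i),
    ← Finset.mul_prod_erase Finset.univ (fun j => (-1:ℝ) ^ ((s j).val * (u j).val))
      (Finset.mem_univ i), ← mul_assoc]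
  congr 1
  · have hfl : (flp i u) i = u i + 1 := by simp [flp]
    rw [hfl]
    rcases fin2_cases (s i) with h | h <;> rcases fin2_cases (u i) with h' | h' <;>
      rw [h, h'] <;>
      norm_num [show ((1:Fin 2)+1) = 0 from rfl, show ((0:Fin 2)+1) = 1 from rfl,
        show ((2:Fin 2)).val = 0 from rfl]
  · apply Finset.prod_congr rfl
    intro j hj
    have hji : j ≠ i := (Finset.mem_erase.mp hj).1
    simp [flp, Function.update_of_ne hji]

lemma eigen {n : ℕ} (s u : Fin n → Fin 2) :
    ∑ w ∈ (hypercube n).neighborFinset u, chi s w = ((n:ℝ) - 2 * wt s) * chi s u := by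
  rw [neighborFinset_eq, Finset.sum_image (fun i _ j _ h => flp_injective u h)]
  simp_rw [chi_flp, ← Finset.sum_mul]
  congr 1
  simp_rw [neg_one_pow_val]
  rw [Finset.sum_sub_distrib]
  push_cast [wt]
  rw [Finset.mul_sum]
  simp

lemma key {n : ℕ} (k : ℕ) (u v : Fin n → Fin 2) :
    (SimpleGraph.adjMatrix ℝ (hypercube n) ^ k) u v
      = (1 / 2 ^ n) * ∑ s : Fin n → Fin 2, chi s u * chi s v * ((n:ℝ) - 2 * wt s) ^ k := by
  induction k generalizing u v with
  | zero =>
    simp only [pow_zero, Matrix.one_apply, mul_one]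
    rw [chi_orth]
    by_cases h : u = v <;> simp [h]
  | succ k ih =>
    rw [pow_succ', SimpleGraph.adjMatrix_mul_apply]
    simp_rw [ih]
    rw [← Finset.mul_sum, Finset.sum_comm]
    congr 1
    apply Finset.sum_congr rfl
    intro s _
    rw [← Finset.sum_mul, ← Finset.sum_mul, eigen]
    ring

lemma wt_eq_card {n : ℕ} (s : Fin n → Fin 2) :
    wt s = (Finset.univ.filter fun i => s i = 1).card := by
  rw [Finset.card_filter, wt]
  apply Finset.sum_congr rfl
  intro i _
  rcases fin2_cases (s i) with h | h <;> simp [h]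

lemma card_wt {n : ℕ} (j : ℕ) :
    (Finset.univ.filter fun s : Fin n → Fin 2 => wt s = j).card = n.choose j := by
  have : (Finset.univ.filter fun s : Fin n → Fin 2 => wt s = j).card
      = (Finset.powersetCard j (Finset.univ : Finset (Fin n))).card := by
    apply Finset.card_bij (fun s _ => Finset.univ.filter fun i => s i = 1)
    · intro s hs
      rw [Finset.mem_powersetCard]
      refine ⟨Finset.filter_subset _ _, ?_⟩
      rw [← wt_eq_card]
      exact (Finset.mem_filter.mp hs).2
    · intro s hs t ht h
      funext i
      have hiff : s i = 1 ↔ t i = 1 := by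
        constructor <;> intro hh
        · have : i ∈ Finset.univ.filter fun i => t i = 1 := h ▸ (by simp [hh])
          simpa using this
        · have : i ∈ Finset.univ.filter fun i => s i = 1 := h.symm ▸ (by simp [hh])
          simpa using this
      rcases fin2_cases (s i) with h1 | h1 <;> rcases fin2_cases (t i) with h2 | h2 <;>
        rw [h1, h2] at hiff ⊢ <;>
        first
          | rfl
          | exact absurd (hiff.mpr rfl) (by decide)
          | exact absurd (hiff.mp rfl) (by decide)
    · intro A hA
      have hfil : (Finset.univ.filter fun i => (if i ∈ A then (1:Fin 2) else 0) = 1) = A := by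
        ext i; by_cases h : i ∈ A <;> simp [h]
      refine ⟨fun i => if i ∈ A then 1 else 0, ?_, hfil⟩
      rw [Finset.mem_filter]
      exact ⟨Finset.mem_univ _, by
        rw [wt_eq_card, hfil]; exact (Finset.mem_powersetCard.mp hA).2⟩
  rw [this, Finset.card_powersetCard, Finset.card_univ, Fintype.card_fin]

theorem stmt6' (n k : ℕ) (u : Fin n → Fin 2) :
    (SimpleGraph.adjMatrix ℝ (hypercube n) ^ k) u u
      = (1 / 2 ^ n) * ∑ j ∈ Finset.range (n + 1),
          (n.choose j : ℝ) * ((n : ℝ) - 2 * j) ^ k := by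
  rw [key]
  congr 1
  simp_rw [chi_mul_self, one_mul]
  have hmaps : ∀ s : Fin n → Fin 2, s ∈ (Finset.univ : Finset (Fin n → Fin 2)) →
      wt s ∈ Finset.range (n + 1) := by
    intro s _
    rw [Finset.mem_range, Nat.lt_succ_iff, wt]
    calc ∑ i, (s i).val ≤ ∑ _i : Fin n, 1 := Finset.sum_le_sum fun i _ => Fin.is_le _
    _ = n := by simp
  rw [← Finset.sum_fiberwise_of_maps_to hmaps]
  apply Finset.sum_congr rfl
  intro j hj
  rw [Finset.sum_congr rfl (fun s hs => by
    rw [(Finset.mem_filter.mp hs).2]), Finset.sum_const, card_wt, nsmul_eq_mul]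

/-- diagonal entries of powers of the adjacency matrix of `Q_n`:
`(A^k)_{uu} = 2^{-n} ∑_{j=0}^n C(n,j) (n − 2j)^k`. -/
theorem stmt6 (n k : ℕ) (u : Fin n → Fin 2) :
    (SimpleGraph.adjMatrix ℝ (hypercube n) ^ k) u u
      = (1 / 2 ^ n) * ∑ j ∈ Finset.range (n + 1),
          (n.choose j : ℝ) * ((n : ℝ) - 2 * j) ^ k := by
  exact stmt6' n k u
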